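/- Let g be a monic divisor of x^{2n} − 1 in K[x] of degree k with 0 ≤ k ≤ 2n − 1, let D ⊆ K^{2n} be the cyclic code corresponding to the ideal ⟨g⟩ of K[x]/⟨x^{2n} − 1⟩ (i.e. D = {(v_0,…,v_{2n−1}) ∈ K^{2n} : the class of v_0 + v_1 x + ⋯ + v_{2n−1}x^{2n−1} lies in the ideal generated by g}), and let V_g ∈ K^{2n} be the coefficient vector of g. Then the additive conjucyclic code C = Ψ^{-1}(D) ⊆ F^n equals the K-linear span of the 2n − k vectors T^i(Ψ^{-1}(V_g)) for 0 ≤ i ≤ 2n − k − 1; in particular these vectors form a K-basis of C (an additive generator matrix of C). -/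

import Mathlib

open Polynomial

/-- The map `Ψ : F^n → K^{2n}`,
`Ψ(α₀,…,α_{n−1}) = (Tr(βα₀),…,Tr(βα_{n−1}), Tr(β̄α₀),…,Tr(β̄α_{n−1}))`, where `β̄ = β^q`. -/
def Psi (q n : ℕ) {K F : Type*} [Field K] [Field F] (Tr : F → K) (β : F)
    (α : Fin n → F) : Fin (2 * n) → K :=
  fun i =>
    if h : (i : ℕ) < n then Tr (β * α ⟨(i : ℕ), h⟩)
    else Tr (β ^ q * α ⟨(i : ℕ) - n, by have := i.isLt; omega⟩)

/-- The conjucyclic shift `T : F^n → F^n`, `T(c₀,…,c_{n−1}) = (c̄_{n−1}, c₀,…,c_{n−2})`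
with `c̄ = c^q`. -/
def Tshift (q n : ℕ) {F : Type*} [Field F] (c : Fin n → F) : Fin n → F :=
  fun i =>
    if _h : (i : ℕ) = 0 then (c ⟨n - 1, by have := i.isLt; omega⟩) ^ q
    else c ⟨(i : ℕ) - 1, by have := i.isLt; omega⟩

/-- The coefficient vector in `K^m` of a polynomial `g ∈ K[x]`. -/
def coeffVec (m : ℕ) {K : Type*} [Field K] (g : K[X]) : Fin m → K :=
  fun i => g.coeff (i : ℕ)

/-- The cyclic code of length `m` corresponding to the ideal `⟨g⟩` of `K[x]/⟨x^m − 1⟩`: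
all vectors `(v₀,…,v_{m−1}) ∈ K^m` such that the class of `v₀ + v₁x + ⋯ + v_{m−1}x^{m−1}`
lies in the ideal generated by (the class of) `g`. -/
def cyclicCodeOf (m : ℕ) {K : Type*} [Field K] (g : K[X]) : Set (Fin m → K) :=
  {v | Ideal.Quotient.mk (Ideal.span {(X : K[X]) ^ m - 1})
        (∑ i : Fin m, Polynomial.C (v i) * X ^ (i : ℕ)) ∈
      Ideal.span {Ideal.Quotient.mk (Ideal.span {(X : K[X]) ^ m - 1}) g}}

section PolySide
variable {K : Type*} [Field K]

noncomputable def polyOfLin (m : ℕ) (K : Type*) [Field K] : (Fin m → K) →ₗ[K] K[X] where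
  toFun v := ∑ i : Fin m, Polynomial.C (v i) * X ^ (i : ℕ)
  map_add' v w := by
    simp only [Pi.add_apply, C_add, add_mul, Finset.sum_add_distrib]
  map_smul' c v := by
    simp only [Pi.smul_apply, smul_eq_mul, C_mul, RingHom.id_apply, smul_eq_C_mul,
      Finset.mul_sum, mul_assoc]

lemma coeff_polyOfLin (m : ℕ) (v : Fin m → K) (j : ℕ) :
    (polyOfLin m K v).coeff j = if h : j < m then v ⟨j, h⟩ else 0 := by
  simp only [polyOfLin, LinearMap.coe_mk, AddHom.coe_mk, finset_sum_coeff, coeff_C_mul,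
    coeff_X_pow, mul_ite, mul_one, mul_zero]
  by_cases h : j < m
  · rw [dif_pos h, Finset.sum_eq_single (⟨j, h⟩ : Fin m)]
    · simp
    · intro b _ hb
      rw [if_neg]
      intro hc
      exact hb (by exact Fin.ext hc.symm)
    · simp
  · rw [dif_neg h]
    apply Finset.sum_eq_zero
    intro b _
    rw [if_neg]
    exact fun hc => h (hc ▸ b.isLt)

lemma natDegree_polyOfLin_lt (m : ℕ) (hm : 0 < m) (v : Fin m → K) :
    (polyOfLin m K v).natDegree < m := by
  have h : (polyOfLin m K v).natDegree ≤ m - 1 := by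
    show (∑ i : Fin m, Polynomial.C (v i) * X ^ (i : ℕ)).natDegree ≤ m - 1
    apply natDegree_sum_le_of_forall_le
    intro i _
    calc (C (v i) * X ^ (i : ℕ)).natDegree
        ≤ (C (v i)).natDegree + (X ^ (i:ℕ) : K[X]).natDegree := natDegree_mul_le
      _ ≤ m - 1 := by
          rw [natDegree_C, natDegree_X_pow]
          have := i.isLt; omega
  omega

lemma polyOfLin_coeffVec (m : ℕ) (p : K[X]) (hp : p.natDegree < m) :
    polyOfLin m K (coeffVec m p) = p := by
  ext j
  rw [coeff_polyOfLin]
  split_ifs with h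
  · rfl
  · exact (coeff_eq_zero_of_natDegree_lt (by omega)).symm

noncomputable def coeffVecLin (m : ℕ) (K : Type*) [Field K] : K[X] →ₗ[K] (Fin m → K) :=
  LinearMap.pi fun j => lcoeff K (j : ℕ)

lemma coeffVecLin_eq (m : ℕ) (p : K[X]) : coeffVecLin m K p = coeffVec m p := rfl

lemma mem_cyclicCodeOf_iff (m : ℕ) (g : K[X]) (hdvd : g ∣ X ^ m - 1) (v : Fin m → K) :
    v ∈ cyclicCodeOf m g ↔ g ∣ polyOfLin m K v := by
  unfold cyclicCodeOf
  rw [Set.mem_setOf_eq]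
  have h1 : Ideal.span {Ideal.Quotient.mk (Ideal.span {(X : K[X]) ^ m - 1}) g}
      = Ideal.map (Ideal.Quotient.mk (Ideal.span {(X : K[X]) ^ m - 1})) (Ideal.span {g}) := by
    rw [Ideal.map_span, Set.image_singleton]
  rw [h1, Ideal.mem_quotient_iff_mem_sup]
  have h2 : Ideal.span {(X : K[X]) ^ m - 1} ≤ Ideal.span {g} := by
    rw [Ideal.span_le, Set.singleton_subset_iff, SetLike.mem_coe]
    exact Ideal.mem_span_singleton.mpr hdvd
  rw [sup_eq_left.mpr h2, Ideal.mem_span_singleton]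
  rfl

lemma cyclicCode_eq_span (m k : ℕ) (hm : 0 < m) (g : K[X]) (hg : g.Monic)
    (hdvd : g ∣ X ^ m - 1) (hdeg : g.natDegree = k) (hk : k ≤ m - 1) :
    cyclicCodeOf m g = (Submodule.span K (Set.range fun i : Fin (m - k) =>
      coeffVec m ((X : K[X]) ^ (i : ℕ) * g)) : Set (Fin m → K)) := by
  have hg0 : g ≠ 0 := hg.ne_zero
  ext v
  rw [SetLike.mem_coe]
  constructor
  · intro hv
    obtain ⟨h, hh⟩ := (mem_cyclicCodeOf_iff m g hdvd v).mp hv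
    rcases eq_or_ne h 0 with rfl | hne
    · have hP0 : polyOfLin m K v = 0 := by rw [hh, mul_zero]
      have : v = 0 := by
        funext j
        have := coeff_polyOfLin m v (j : ℕ)
        rw [hP0, dif_pos j.isLt] at this
        simpa using this.symm
      rw [this]; exact Submodule.zero_mem _
    · have hdh : h.natDegree < m - k := by
        have h1 : (polyOfLin m K v).natDegree < m := natDegree_polyOfLin_lt m hm v
        rw [hh, natDegree_mul hg0 hne, hdeg] at h1
        omega
      have hexp : polyOfLin m K v
          = ∑ i ∈ Finset.range (m - k), h.coeff i • ((X : K[X]) ^ i * g) := by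
        rw [hh]
        conv_lhs => rw [h.as_sum_range' (m - k) hdh]
        rw [Finset.mul_sum]
        apply Finset.sum_congr rfl
        intro i _
        rw [smul_eq_C_mul, ← C_mul_X_pow_eq_monomial]
        ring
      have hv2 : v = ∑ i ∈ Finset.range (m - k), h.coeff i • coeffVec m ((X : K[X]) ^ i * g) := by
        have : v = coeffVecLin m K (polyOfLin m K v) := by
          funext j
          rw [coeffVecLin_eq]
          show v j = (polyOfLin m K v).coeff (j : ℕ)
          rw [coeff_polyOfLin, dif_pos j.isLt]
        rw [this, hexp, map_sum]
        apply Finset.sum_congr rfl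
        intro i _
        rw [map_smul, coeffVecLin_eq]
      rw [hv2]
      apply Submodule.sum_mem
      intro i hi
      rw [Finset.mem_range] at hi
      exact Submodule.smul_mem _ _ (Submodule.subset_span ⟨⟨i, hi⟩, rfl⟩)
  · intro hv
    rw [mem_cyclicCodeOf_iff m g hdvd v]
    have hle : Submodule.span K (Set.range fun i : Fin (m - k) =>
        coeffVec m ((X : K[X]) ^ (i : ℕ) * g))
        ≤ Submodule.comap (polyOfLin m K) ((Ideal.span {g}).restrictScalars K) := by
      rw [Submodule.span_le]
      rintro x ⟨i, rfl⟩
      simp only [Submodule.mem_comap, Submodule.coe_restrictScalars, SetLike.mem_coe,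
        Submodule.restrictScalars_mem, Ideal.mem_span_singleton]
      rw [polyOfLin_coeffVec]
      · exact Dvd.intro_left _ rfl
      · rw [natDegree_mul (pow_ne_zero _ X_ne_zero) hg0, natDegree_X_pow, hdeg]
        have := i.isLt; omega
    have := hle hv
    simpa only [Submodule.mem_comap, Submodule.restrictScalars_mem,
      Ideal.mem_span_singleton] using this

lemma li_coeffVec (m k : ℕ) (hm : 0 < m) (g : K[X]) (hg : g.Monic)
    (hdeg : g.natDegree = k) (hk : k ≤ m - 1) :
    LinearIndependent K (fun i : Fin (m - k) => coeffVec m ((X : K[X]) ^ (i : ℕ) * g)) := by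
  have hg0 : g ≠ 0 := hg.ne_zero
  rw [Fintype.linearIndependent_iff]
  intro c hc i
  have hmk : 0 < m - k := by omega
  set h : K[X] := polyOfLin (m - k) K c with hh
  have hexp : h * g = ∑ i : Fin (m - k), c i • ((X : K[X]) ^ (i : ℕ) * g) := by
    rw [hh]
    show (∑ i : Fin (m - k), Polynomial.C (c i) * X ^ (i : ℕ)) * g = _
    rw [Finset.sum_mul]
    apply Finset.sum_congr rfl
    intro i _
    rw [smul_eq_C_mul]
    ring
  have hzero : coeffVecLin m K (h * g) = 0 := by
    rw [hexp, map_sum]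
    rw [← hc]
    apply Finset.sum_congr rfl
    intro i _
    rw [map_smul, coeffVecLin_eq]
  have hdeglt : (h * g).natDegree < m := by
    calc (h * g).natDegree ≤ h.natDegree + g.natDegree := natDegree_mul_le
      _ < m := by
          have h2 := natDegree_polyOfLin_lt (m - k) hmk c
          rw [← hh] at h2
          rw [hdeg]; omega
  have hhg : h * g = 0 := by
    ext j
    rcases Nat.lt_or_ge j m with hj | hj
    · have := congrFun hzero ⟨j, hj⟩
      rw [coeff_zero]; exact this
    · simp [coeff_eq_zero_of_natDegree_lt (lt_of_lt_of_le hdeglt hj)]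
  have hh0 : h = 0 := by
    rcases mul_eq_zero.mp hhg with h0 | h0
    · exact h0
    · exact absurd h0 hg0
  have := coeff_polyOfLin (m - k) c (i : ℕ)
  rw [← hh, hh0, dif_pos i.isLt] at this
  simpa using this.symm

end PolySide

section PsiSide
variable (q n : ℕ) {K F : Type*} [Field K] [Field F] (Tr : F → K) (β : F)

lemma Psi_lo (α : Fin n → F) (j : Fin (2 * n)) (h : (j : ℕ) < n) :
    Psi q n Tr β α j = Tr (β * α ⟨(j : ℕ), h⟩) := by
  simp only [Psi]
  rw [dif_pos h]

lemma Psi_hi (α : Fin n → F) (j : Fin (2 * n)) (h : ¬ (j : ℕ) < n) (h2 : (j : ℕ) - n < n) :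
    Psi q n Tr β α j = Tr (β ^ q * α ⟨(j : ℕ) - n, h2⟩) := by
  simp only [Psi]
  rw [dif_neg h]

lemma Tshift_zero (c : Fin n → F) (i : Fin n) (h : (i : ℕ) = 0) (h2 : n - 1 < n) :
    Tshift q n c i = (c ⟨n - 1, h2⟩) ^ q := by
  simp only [Tshift]
  rw [dif_pos h]

lemma Tshift_succ (c : Fin n → F) (i : Fin n) (h : ¬ (i : ℕ) = 0) (h2 : (i : ℕ) - 1 < n) :
    Tshift q n c i = c ⟨(i : ℕ) - 1, h2⟩ := by
  simp only [Tshift]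
  rw [dif_neg h]

end PsiSide

lemma fin_congr {m : ℕ} {G : Type*} (c : Fin m → G) (a b : Fin m) (h : (a : ℕ) = (b : ℕ)) :
    c a = c b := by
  rw [Fin.ext h]


/-- Let `g` be a monic divisor of `x^{2n} − 1` in `K[x]` of degree `k` with
`0 ≤ k ≤ 2n − 1`, `D ⊆ K^{2n}` the cyclic code corresponding to `⟨g⟩`, and `V_g ∈ K^{2n}`
the coefficient vector of `g`.  Then the additive conjucyclic code `C = Ψ⁻¹(D) ⊆ F^n`
equals the `K`-linear span of the `2n − k` vectors `T^i(Ψ⁻¹(V_g))`, `0 ≤ i ≤ 2n − k − 1`,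
and these vectors are `K`-linearly independent (so they form a `K`-basis of `C`). -/
theorem stmt13 (q n k : ℕ) (hn : 0 < n) {K F : Type*} [Field K] [Fintype K] [Field F]
    [Fintype F] [Algebra K F]
    (hK : Fintype.card K = q) (hF : Fintype.card F = q ^ 2)
    (β : F) (hβ : ∀ x : F, x ≠ 0 → ∃ j : ℕ, x = β ^ j)
    (Tr : F → K) (hTr : ∀ x : F, algebraMap K F (Tr x) = x + x ^ q)
    (g : K[X]) (hg : g.Monic) (hdvd : g ∣ X ^ (2 * n) - 1)
    (hdeg : g.natDegree = k) (hk : k ≤ 2 * n - 1) :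
    Psi q n Tr β ⁻¹' cyclicCodeOf (2 * n) g =
      (Submodule.span K (Set.range fun i : Fin (2 * n - k) =>
          (Tshift q n)^[(i : ℕ)]
            (Function.invFun (Psi q n Tr β) (coeffVec (2 * n) g))) : Set (Fin n → F)) ∧
    LinearIndependent K (fun i : Fin (2 * n - k) =>
      (Tshift q n)^[(i : ℕ)]
        (Function.invFun (Psi q n Tr β) (coeffVec (2 * n) g))) := by
  classical
  have hq2 : 2 ≤ q := hK ▸ Fintype.one_lt_card
  -- characteristic facts
  obtain ⟨t, hp, hcard⟩ := FiniteField.card K (ringChar K)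
  haveI : Fact (Nat.Prime (ringChar K)) := ⟨hp⟩
  have hinj : Function.Injective (algebraMap K F) := (algebraMap K F).injective
  haveI : CharP F (ringChar K) := charP_of_injective_algebraMap hinj (ringChar K)
  have hq : q = (ringChar K) ^ (t : ℕ) := by rw [← hK, hcard]
  have frob : ∀ x y : F, (x + y) ^ q = x ^ q + y ^ q := by
    intro x y; rw [hq]; exact add_pow_char_pow x y (ringChar K) (t : ℕ)
  have hKq : ∀ c : K, c ^ q = c := fun c => by rw [← hK]; exact FiniteField.pow_card c
  have hFq2 : ∀ x : F, (x ^ q) ^ q = x := fun x => by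
    rw [← pow_mul, show q * q = q ^ 2 by ring, ← hF]
    exact FiniteField.pow_card x
  -- trace facts
  have trAdd : ∀ x y : F, Tr (x + y) = Tr x + Tr y := by
    intro x y; apply hinj
    rw [map_add, hTr, hTr, hTr, frob]; ring
  have trSmul : ∀ (c : K) (x : F), Tr (algebraMap K F c * x) = c * Tr x := by
    intro c x; apply hinj
    rw [map_mul, hTr, hTr, mul_pow, ← map_pow, hKq]; ring
  have trConj : ∀ x : F, Tr (β * x ^ q) = Tr (β ^ q * x) := by
    intro x; apply hinj
    rw [hTr, hTr, mul_pow, mul_pow, hFq2, hFq2]; ring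
  have trConj2 : ∀ x : F, Tr (β ^ q * x ^ q) = Tr (β * x) := by
    intro x; apply hinj
    rw [hTr, hTr, mul_pow, mul_pow, hFq2, hFq2]; ring
  have hTzero : ∀ x : F, Tr x = 0 → x + x ^ q = 0 := fun x hx => by
    have h := hTr x; rw [hx, map_zero] at h; exact h.symm
  -- β ^ q * β ^ q ≠ β * β
  have hbne : β ^ q * β ^ q ≠ β * β := by
    intro hEq
    have hcardF : 4 ≤ Fintype.card F := by rw [hF]; nlinarith
    obtain ⟨x, hx⟩ : ∃ x : F, x ∉ ({0, 1} : Finset F) := by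
      by_contra hall
      push_neg at hall
      have hsub : (Finset.univ : Finset F) ⊆ {0, 1} := fun x _ => hall x
      have h1 := Finset.card_le_card hsub
      have h2 : ({0, 1} : Finset F).card ≤ 2 :=
        (Finset.card_insert_le _ _).trans (by simp)
      rw [Finset.card_univ] at h1
      omega
    have hx0 : x ≠ 0 := by intro h; apply hx; simp [h]
    have hx1 : x ≠ 1 := by intro h; apply hx; simp [h]
    have hβ0 : β ≠ 0 := by
      rintro rfl
      obtain ⟨j, hj⟩ := hβ x hx0
      rcases Nat.eq_zero_or_pos j with rfl | hj'
      · rw [pow_zero] at hj; exact hx1 hj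
      · rw [zero_pow (by omega)] at hj; exact hx0 hj
    have hd : 0 < 2 * q - 2 := by omega
    have hroot : β ^ (2 * q - 2) = 1 := by
      have h1 : β ^ (2 * q - 2) * (β * β) = β * β := by
        have h2 : β ^ (2 * q - 2) * (β * β) = β ^ q * β ^ q := by
          rw [show β * β = β ^ 2 by ring, ← pow_add,
            show 2 * q - 2 + 2 = q + q by omega, pow_add]
        rw [h2, hEq]
      exact mul_right_cancel₀ (mul_ne_zero hβ0 hβ0) (by rw [h1, one_mul])
    have hsub : (Finset.univ.erase (0 : F)) ⊆ Polynomial.nthRootsFinset (2 * q - 2) (1 : F) := by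
      intro y hy
      rw [Polynomial.mem_nthRootsFinset hd]
      obtain ⟨j, rfl⟩ := hβ y (Finset.ne_of_mem_erase hy)
      rw [← pow_mul, mul_comm j, pow_mul, hroot, one_pow]
    have h1 := Finset.card_le_card hsub
    have h2 : (Polynomial.nthRootsFinset (2 * q - 2) (1 : F)).card ≤ 2 * q - 2 :=
      (Multiset.toFinset_card_le _).trans (Polynomial.card_nthRoots _ _)
    have h3 : (Finset.univ.erase (0 : F)).card = q ^ 2 - 1 := by
      rw [Finset.card_erase_of_mem (Finset.mem_univ _), Finset.card_univ, hF]
    rw [h3] at h1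
    have h4 : q ^ 2 = q * q := by ring
    have h5 : 2 * q ≤ q * q := by nlinarith
    omega
  -- linearity of Psi
  have psiAdd : ∀ a b : Fin n → F,
      Psi q n Tr β (a + b) = Psi q n Tr β a + Psi q n Tr β b := by
    intro a b; funext i
    simp only [Psi, Pi.add_apply]
    split_ifs <;> rw [mul_add, trAdd]
  have psiSmul : ∀ (c : K) (a : Fin n → F),
      Psi q n Tr β (c • a) = c • Psi q n Tr β a := by
    intro c a; funext i
    simp only [Psi, Pi.smul_apply, smul_eq_mul, Algebra.smul_def]
    split_ifs <;> rw [mul_left_comm, trSmul]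
  let e0 : (Fin n → F) →ₗ[K] (Fin (2 * n) → K) :=
    { toFun := Psi q n Tr β, map_add' := psiAdd, map_smul' := psiSmul }
  -- injectivity
  have hker : ∀ a : Fin n → F, Psi q n Tr β a = 0 → a = 0 := by
    intro a ha
    funext j
    have hjn : (j : ℕ) < n := j.isLt
    have h1 : Tr (β * a j) = 0 := by
      have h := congrFun ha (⟨(j : ℕ), by omega⟩ : Fin (2 * n))
      rw [Psi_lo q n Tr β a _ hjn, Pi.zero_apply] at h
      exact h
    have h2 : Tr (β ^ q * a j) = 0 := by
      have hlt : n + (j : ℕ) < 2 * n := by omega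
      have h := congrFun ha (⟨n + (j : ℕ), hlt⟩ : Fin (2 * n))
      have hnn : ¬ ((⟨n + (j : ℕ), hlt⟩ : Fin (2 * n)) : ℕ) < n := by
        show ¬ n + (j : ℕ) < n; omega
      have hsub : ((⟨n + (j : ℕ), hlt⟩ : Fin (2 * n)) : ℕ) - n < n := by
        show n + (j : ℕ) - n < n; omega
      rw [Psi_hi q n Tr β a _ hnn hsub, Pi.zero_apply] at h
      have hidx : (⟨((⟨n + (j : ℕ), hlt⟩ : Fin (2 * n)) : ℕ) - n, hsub⟩ : Fin n) = j :=
        Fin.ext (show n + (j : ℕ) - n = (j : ℕ) by omega)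
      rw [hidx] at h
      exact h
    have e1 := hTzero _ h1
    have e2 := hTzero _ h2
    rw [mul_pow] at e1 e2
    rw [hFq2 β] at e2
    have e3 : (β ^ q * β ^ q - β * β) * (a j) ^ q = 0 := by
      linear_combination β ^ q * e1 - β * e2
    have e4 : (a j) ^ q = 0 := by
      rcases mul_eq_zero.mp e3 with h0 | h0
      · exact absurd (sub_eq_zero.mp h0) hbne
      · exact h0
    have := pow_eq_zero_iff (show q ≠ 0 by omega) |>.mp e4
    simpa using this
  have hinj2 : Function.Injective (Psi q n Tr β) := by
    intro a b hab
    have h : Psi q n Tr β (a - b) = 0 := by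
      have hs := map_sub e0 a b
      show e0 (a - b) = 0
      rw [hs, show e0 a = Psi q n Tr β a from rfl, show e0 b = Psi q n Tr β b from rfl,
        hab, sub_self]
    exact sub_eq_zero.mp (hker _ h)
  have hcards : Fintype.card (Fin n → F) = Fintype.card (Fin (2 * n) → K) := by
    rw [Fintype.card_fun, Fintype.card_fun, Fintype.card_fin, Fintype.card_fin, hF, hK,
      ← pow_mul]
  have hbij : Function.Bijective (Psi q n Tr β) :=
    (Fintype.bijective_iff_injective_and_card _).mpr ⟨hinj2, hcards⟩
  let e : (Fin n → F) ≃ₗ[K] (Fin (2 * n) → K) := LinearEquiv.ofBijective e0 hbij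
  have hco : ∀ x : Fin n → F, e x = Psi q n Tr β x := fun _ => rfl
  have hrinv : ∀ y, Psi q n Tr β (Function.invFun (Psi q n Tr β) y) = y :=
    Function.rightInverse_invFun hbij.2
  -- the key shift step
  have hstep : ∀ (c : Fin n → F) (p : K[X]), p.natDegree ≤ 2 * n - 2 →
      Psi q n Tr β c = coeffVec (2 * n) p →
      Psi q n Tr β (Tshift q n c) = coeffVec (2 * n) (X * p) := by
    intro c p hp hc
    funext j
    have hj2 := j.isLt
    have hcf : ∀ (jv : ℕ) (h : jv < 2 * n),
        p.coeff jv = Psi q n Tr β c ⟨jv, h⟩ := by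
      intro jv h
      rw [hc]; rfl
    have hrhs : coeffVec (2 * n) (X * p) j = (X * p).coeff (j : ℕ) := rfl
    rcases Nat.eq_zero_or_pos (j : ℕ) with h0 | h0
    · -- j = 0
      have hlt : (j : ℕ) < n := by omega
      have hn1 : n - 1 < n := by omega
      rw [Psi_lo q n Tr β _ j hlt]
      have hTv : Tshift q n c ⟨(j : ℕ), hlt⟩ = (c ⟨n - 1, hn1⟩) ^ q :=
        Tshift_zero q n c _ h0 hn1
      rw [hTv, trConj]
      have hz : (X * p).coeff (j : ℕ) = 0 := by
        rw [h0, mul_coeff_zero, coeff_X_zero, zero_mul]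
      rw [hrhs, hz]
      -- goal : Tr (β ^ q * c ⟨n - 1, hn1⟩) = 0
      have hlt2 : 2 * n - 1 < 2 * n := by omega
      have h9 : p.coeff (2 * n - 1) = 0 := coeff_eq_zero_of_natDegree_lt (by omega)
      have h11 := hcf (2 * n - 1) hlt2
      have hnn : ¬ ((⟨2 * n - 1, hlt2⟩ : Fin (2 * n)) : ℕ) < n := by
        show ¬ 2 * n - 1 < n; omega
      have hsub2 : ((⟨2 * n - 1, hlt2⟩ : Fin (2 * n)) : ℕ) - n < n := by
        show 2 * n - 1 - n < n; omega
      rw [Psi_hi q n Tr β c _ hnn hsub2, h9] at h11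
      have hcc : c ⟨n - 1, hn1⟩
          = c ⟨((⟨2 * n - 1, hlt2⟩ : Fin (2 * n)) : ℕ) - n, hsub2⟩ :=
        fin_congr c _ _ (show n - 1 = 2 * n - 1 - n by omega)
      rw [hcc]
      exact h11.symm
    rcases Nat.lt_or_ge (j : ℕ) n with h | h
    · -- 0 < j < n
      have hj1 : (j : ℕ) - 1 < n := by omega
      rw [Psi_lo q n Tr β _ j h]
      have hTv : Tshift q n c ⟨(j : ℕ), h⟩ = c ⟨(j : ℕ) - 1, hj1⟩ :=
        Tshift_succ q n c _ (show ¬ (j : ℕ) = 0 by omega) hj1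
      rw [hTv]
      have hXp : (X * p).coeff (j : ℕ) = p.coeff ((j : ℕ) - 1) := by
        conv_lhs => rw [show (j : ℕ) = ((j : ℕ) - 1) + 1 by omega]
        rw [coeff_X_mul]
      rw [hrhs, hXp, hcf ((j : ℕ) - 1) (by omega),
        Psi_lo q n Tr β c _ (show ((⟨(j : ℕ) - 1, by omega⟩ : Fin (2 * n)) : ℕ) < n from hj1)]
    rcases Nat.eq_or_lt_of_le h with hjn | hjn
    · -- j = n
      have hnn : ¬ (j : ℕ) < n := by omega
      have hsubn : (j : ℕ) - n < n := by omega
      rw [Psi_hi q n Tr β _ j hnn hsubn]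
      have hn1 : n - 1 < n := by omega
      have hTv : Tshift q n c ⟨(j : ℕ) - n, hsubn⟩ = (c ⟨n - 1, hn1⟩) ^ q :=
        Tshift_zero q n c _ (show (j : ℕ) - n = 0 by omega) hn1
      rw [hTv, trConj2]
      have hXp : (X * p).coeff (j : ℕ) = p.coeff ((j : ℕ) - 1) := by
        conv_lhs => rw [show (j : ℕ) = ((j : ℕ) - 1) + 1 by omega]
        rw [coeff_X_mul]
      have hj1 : (j : ℕ) - 1 < 2 * n := by omega
      rw [hrhs, hXp, hcf ((j : ℕ) - 1) hj1,
        Psi_lo q n Tr β c _ (show ((⟨(j : ℕ) - 1, hj1⟩ : Fin (2 * n)) : ℕ) < n by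
          show (j : ℕ) - 1 < n; omega)]
      have hcc : c ⟨n - 1, hn1⟩ = c ⟨((⟨(j : ℕ) - 1, hj1⟩ : Fin (2 * n)) : ℕ),
          show ((⟨(j : ℕ) - 1, hj1⟩ : Fin (2 * n)) : ℕ) < n by show (j : ℕ) - 1 < n; omega⟩ :=
        fin_congr c _ _ (show n - 1 = (j : ℕ) - 1 by omega)
      rw [hcc]
    · -- n < j
      have hnn : ¬ (j : ℕ) < n := by omega
      have hsubn : (j : ℕ) - n < n := by omega
      rw [Psi_hi q n Tr β _ j hnn hsubn]
      have hj1' : (j : ℕ) - n - 1 < n := by omega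
      have hTv : Tshift q n c ⟨(j : ℕ) - n, hsubn⟩ = c ⟨(j : ℕ) - n - 1, hj1'⟩ :=
        Tshift_succ q n c _ (show ¬ (j : ℕ) - n = 0 by omega) hj1'
      rw [hTv]
      have hXp : (X * p).coeff (j : ℕ) = p.coeff ((j : ℕ) - 1) := by
        conv_lhs => rw [show (j : ℕ) = ((j : ℕ) - 1) + 1 by omega]
        rw [coeff_X_mul]
      have hj1 : (j : ℕ) - 1 < 2 * n := by omega
      have hnn1 : ¬ ((⟨(j : ℕ) - 1, hj1⟩ : Fin (2 * n)) : ℕ) < n := by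
        show ¬ (j : ℕ) - 1 < n; omega
      have hsub1 : ((⟨(j : ℕ) - 1, hj1⟩ : Fin (2 * n)) : ℕ) - n < n := by
        show (j : ℕ) - 1 - n < n; omega
      rw [hrhs, hXp, hcf ((j : ℕ) - 1) hj1, Psi_hi q n Tr β c _ hnn1 hsub1]
      have hcc : c ⟨(j : ℕ) - n - 1, hj1'⟩
          = c ⟨((⟨(j : ℕ) - 1, hj1⟩ : Fin (2 * n)) : ℕ) - n, hsub1⟩ :=
        fin_congr c _ _ (show (j : ℕ) - n - 1 = (j : ℕ) - 1 - n by omega)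
      rw [hcc]
  -- iterate
  set w := Function.invFun (Psi q n Tr β) (coeffVec (2 * n) g) with hw
  have hiter : ∀ i : ℕ, i ≤ 2 * n - 1 - k →
      Psi q n Tr β ((Tshift q n)^[i] w) = coeffVec (2 * n) ((X : K[X]) ^ i * g) := by
    intro i
    induction i with
    | zero =>
      intro _
      rw [Function.iterate_zero, id_eq, hw, hrinv, pow_zero, one_mul]
    | succ i ih =>
      intro hile
      rw [Function.iterate_succ_apply']
      have h1 := ih (by omega)
      have h2 : ((X : K[X]) ^ i * g).natDegree ≤ 2 * n - 2 := by
        rw [natDegree_mul (pow_ne_zero _ X_ne_zero) hg.ne_zero, natDegree_X_pow, hdeg]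
        omega
      have h3 := hstep _ _ h2 h1
      rw [h3, show (X : K[X]) * ((X : K[X]) ^ i * g) = (X : K[X]) ^ (i + 1) * g by ring]
  -- generators
  have hgen : ∀ i : Fin (2 * n - k),
      (Tshift q n)^[(i : ℕ)] w = e.symm (coeffVec (2 * n) ((X : K[X]) ^ (i : ℕ) * g)) := by
    intro i
    have hi : (i : ℕ) ≤ 2 * n - 1 - k := by have := i.isLt; omega
    apply hbij.1
    rw [hiter _ hi, ← hco, e.apply_symm_apply]
  constructor
  · -- the set equality
    rw [cyclicCode_eq_span (2 * n) k (by omega) g hg hdvd hdeg hk]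
    have h1 : Psi q n Tr β ⁻¹' (↑(Submodule.span K (Set.range fun i : Fin (2 * n - k) =>
        coeffVec (2 * n) ((X : K[X]) ^ (i : ℕ) * g))) : Set (Fin (2 * n) → K))
        = ⇑e.symm '' (↑(Submodule.span K (Set.range fun i : Fin (2 * n - k) =>
        coeffVec (2 * n) ((X : K[X]) ^ (i : ℕ) * g))) : Set (Fin (2 * n) → K)) := by
      refine (congrFun (Set.image_eq_preimage_of_inverse ?_ ?_) _).symm
      · intro x; exact e.apply_symm_apply x
      · intro x; exact e.symm_apply_apply x
    rw [h1, show (⇑e.symm : _ → _) = ⇑(e.symm.toLinearMap) from rfl, ← Submodule.map_coe,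
      Submodule.map_span, ← Set.range_comp, LinearEquiv.coe_coe]
    have h2 : (⇑e.symm ∘ fun i : Fin (2 * n - k) =>
        coeffVec (2 * n) ((X : K[X]) ^ (i : ℕ) * g))
        = fun i : Fin (2 * n - k) => (Tshift q n)^[(i : ℕ)] w := by
      funext i
      exact (hgen i).symm
    rw [h2]
  · -- linear independence
    have hli0 := li_coeffVec (2 * n) k (by omega) g hg hdeg hk
    have hli := hli0.map' e.symm.toLinearMap (LinearMap.ker_eq_bot.mpr e.symm.injective)
    have heq : (fun i : Fin (2 * n - k) => (Tshift q n)^[(i : ℕ)] w)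
        = ⇑e.symm.toLinearMap ∘ (fun i : Fin (2 * n - k) =>
            coeffVec (2 * n) ((X : K[X]) ^ (i : ℕ) * g)) := by
      funext i
      exact hgen i
    rw [heq]
    exact hli
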